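/- For any two probability vectors p ≠ q in the simplex Δ_n and θ ∈ (0,1), one has var_ω(θp + (1-θ)q) > θ·var_ω(p) + (1-θ)·var_ω(q); i.e., the variance p ↦ (1/2)p^T Ω p is strictly concave on the probability simplex, where Ω is the effective resistance matrix of a connected weighted graph. -/

import Mathlib

open Finset Matrix

/-- Strict concavity of the variance `p ↦ (1/2) pᵀ Ω p` on the probability simplex, where
`Ω` is the effective resistance matrix (`ω_{ij} = (e_i - e_j)ᵀ Q† (e_i - e_j)`) of a connected
weighted graph: its Laplacian `Q` is positive semidefinite with kernel spanned by the all-ones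
vector, and `Qd` is the Moore–Penrose pseudoinverse of `Q`. -/
theorem var_strict_concave_on_simplex {n : ℕ} (Q Qd : Matrix (Fin n) (Fin n) ℝ)
    (hQ : Q.PosSemidef)
    (hker : ∀ x : Fin n → ℝ, Q *ᵥ x = 0 ↔ ∃ c : ℝ, x = fun _ => c)
    (h1 : Q * Qd * Q = Q) (h2 : Qd * Q * Qd = Qd)
    (h3 : (Q * Qd)ᵀ = Q * Qd) (h4 : (Qd * Q)ᵀ = Qd * Q)
    (Ω : Matrix (Fin n) (Fin n) ℝ)
    (hΩ : ∀ i j, Ω i j =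
      (Pi.single i 1 - Pi.single j 1) ⬝ᵥ Qd *ᵥ (Pi.single i 1 - Pi.single j 1))
    (p q : Fin n → ℝ) (hp0 : ∀ i, 0 ≤ p i) (hq0 : ∀ i, 0 ≤ q i)
    (hp : ∑ i, p i = 1) (hq : ∑ i, q i = 1) (hpq : p ≠ q)
    (θ : ℝ) (hθ0 : 0 < θ) (hθ1 : θ < 1) :
    θ * ((1 / 2) * (p ⬝ᵥ Ω *ᵥ p)) + (1 - θ) * ((1 / 2) * (q ⬝ᵥ Ω *ᵥ q))
      < (1 / 2) * ((θ • p + (1 - θ) • q) ⬝ᵥ Ω *ᵥ (θ • p + (1 - θ) • q)) := by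
  -- n is positive
  have hn : 0 < n := by
    rcases Nat.eq_zero_or_pos n with h | h
    · subst h; simp at hp
    · exact h
  -- Q is symmetric
  have hQsym : Qᵀ = Q := by
    have := hQ.1
    simpa [Matrix.IsHermitian, Matrix.conjTranspose_eq_transpose_of_trivial] using this
  -- row/column sums of Q vanish
  have hQu : Q *ᵥ (fun _ => (1:ℝ)) = 0 := (hker _).mpr ⟨1, rfl⟩
  have hrow : ∀ i, ∑ j, Q i j = 0 := by
    intro i
    have := congrFun hQu i
    simpa [Matrix.mulVec, dotProduct] using this
  have hsymE : ∀ i j, Q i j = Q j i := by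
    intro i j
    exact congrFun (congrFun hQsym j) i
  have hcol : ∀ j, ∑ i, Q i j = 0 := by
    intro j
    calc ∑ i, Q i j = ∑ i, Q j i := Finset.sum_congr rfl fun i _ => hsymE i j
    _ = 0 := hrow j
  -- the image of Q has zero coordinate sums
  have hsumQx : ∀ x : Fin n → ℝ, ∑ i, (Q *ᵥ x) i = 0 := by
    intro x
    calc ∑ i, (Q *ᵥ x) i = ∑ i, ∑ j, Q i j * x j := by
          simp [Matrix.mulVec, dotProduct]
    _ = ∑ j, ∑ i, Q i j * x j := Finset.sum_comm
    _ = ∑ j, (∑ i, Q i j) * x j := by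
          refine Finset.sum_congr rfl fun j _ => ?_
          rw [Finset.sum_mul]
    _ = 0 := by simp [hcol]
  -- Q = Q * Q * Qd
  have e1 : Qdᵀ * Q = Q * Qd := by
    calc Qdᵀ * Q = (Q * Qd)ᵀ := by rw [Matrix.transpose_mul, hQsym]
    _ = Q * Qd := h3
  have hQQ : Q * Q * Qd = Q := by
    have e2 : Qdᵀ * (Q * Q) = Q := by
      calc Qdᵀ * (Q * Q) = (Qdᵀ * Q) * Q := by rw [Matrix.mul_assoc]
      _ = (Q * Qd) * Q := by rw [e1]
      _ = Q := h1
    calc Q * Q * Qd = (Qdᵀ * (Q * Q))ᵀ := by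
          rw [Matrix.transpose_mul, Matrix.transpose_transpose,
            Matrix.transpose_mul, hQsym]
    _ = Qᵀ := by rw [e2]
    _ = Q := hQsym
  -- the difference vector
  set v : Fin n → ℝ := p - q with hv_def
  have hv : v ≠ 0 := sub_ne_zero.mpr hpq
  have hsv : ∑ i, v i = 0 := by
    simp [hv_def, Finset.sum_sub_distrib, hp, hq]
  -- v is in the range of Q: Q (Qd v) = v
  set y : Fin n → ℝ := Qd *ᵥ v with hy_def
  have hfix : Q *ᵥ y = v := by
    set w : Fin n → ℝ := v - Q *ᵥ y with hw_def
    have hQw : Q *ᵥ w = 0 := by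
      have key : Q *ᵥ (Q *ᵥ y) = Q *ᵥ v := by
        simp only [hy_def, Matrix.mulVec_mulVec]
        rw [show Q * (Q * Qd) = Q * Q * Qd from (Matrix.mul_assoc Q Q Qd).symm, hQQ]
      rw [hw_def, Matrix.mulVec_sub, key, sub_self]
    obtain ⟨c, hc⟩ := (hker w).mp hQw
    have hsw : ∑ i, w i = 0 := by
      simp [hw_def, Finset.sum_sub_distrib, hsv, hsumQx]
    have hc0 : c = 0 := by
      rw [hc] at hsw
      simp only [Finset.sum_const, Finset.card_univ, Fintype.card_fin, nsmul_eq_mul] at hsw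
      have hne : (n:ℝ) ≠ 0 := Nat.cast_ne_zero.mpr hn.ne'
      exact (mul_eq_zero.mp hsw).resolve_left hne
    have : w = 0 := by rw [hc, hc0]; ext i; rfl
    have := sub_eq_zero.mp (by rw [← hw_def]; exact this)
    exact this.symm
  -- the quadratic form value is positive
  set S : ℝ := v ⬝ᵥ Qd *ᵥ v with hS_def
  have hSy : S = y ⬝ᵥ Q *ᵥ y := by
    calc S = v ⬝ᵥ y := by rw [hS_def, hy_def]
    _ = (Q *ᵥ y) ⬝ᵥ y := by rw [hfix]
    _ = y ⬝ᵥ Q *ᵥ y := dotProduct_comm _ _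
  have hS : 0 < S := by
    have hnonneg : 0 ≤ y ⬝ᵥ Q *ᵥ y := by
      have := hQ.dotProduct_mulVec_nonneg y
      simpa using this
    rcases lt_or_eq_of_le hnonneg with h | h
    · rw [hSy]; exact h
    · exfalso
      have hz : Q *ᵥ y = 0 := by
        have := (hQ.dotProduct_mulVec_zero_iff y).mp (by simpa using h.symm)
        exact this
      exact hv (by rw [← hfix, hz])
  -- entries of Ω
  have hΩ' : ∀ i j, Ω i j = Qd i i + Qd j j - Qd i j - Qd j i := by
    intro i j
    rw [hΩ i j]
    simp [sub_dotProduct, Matrix.mulVec_sub, dotProduct_sub,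
      Matrix.mulVec_single, single_dotProduct]
    ring
  -- v ⬝ Ω v = -2 S
  have hvΩv : v ⬝ᵥ Ω *ᵥ v = -2 * S := by
    have hA3 : ∑ i, ∑ j, v i * (Qd i j * v j) = S := by
      rw [hS_def]
      simp [dotProduct, Matrix.mulVec, Finset.mul_sum]
    have hA4 : ∑ i, ∑ j, v i * (Qd j i * v j) = S := by
      rw [Finset.sum_comm, ← hA3]
      refine Finset.sum_congr rfl fun i _ => Finset.sum_congr rfl fun j _ => by ring
    have hA1 : ∑ i, ∑ j, v i * (Qd i i * v j) = 0 := by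
      calc ∑ i, ∑ j, v i * (Qd i i * v j) = ∑ i, (v i * Qd i i) * ∑ j, v j := by
            refine Finset.sum_congr rfl fun i _ => ?_
            rw [Finset.mul_sum]
            exact Finset.sum_congr rfl fun j _ => by ring
      _ = 0 := by simp [hsv]
    have hA2 : ∑ i, ∑ j, v i * (Qd j j * v j) = 0 := by
      calc ∑ i, ∑ j, v i * (Qd j j * v j) = ∑ i, v i * ∑ j, Qd j j * v j := by
            refine Finset.sum_congr rfl fun i _ => ?_
            rw [Finset.mul_sum]
      _ = (∑ i, v i) * ∑ j, Qd j j * v j := by rw [← Finset.sum_mul]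
      _ = 0 := by rw [hsv, zero_mul]
    calc v ⬝ᵥ Ω *ᵥ v = ∑ i, ∑ j, v i * (Ω i j * v j) := by
          simp [dotProduct, Matrix.mulVec, Finset.mul_sum]
    _ = ∑ i, ∑ j, (v i * (Qd i i * v j) + v i * (Qd j j * v j)
          - v i * (Qd i j * v j) - v i * (Qd j i * v j)) := by
          refine Finset.sum_congr rfl fun i _ => Finset.sum_congr rfl fun j _ => ?_
          rw [hΩ' i j]; ring
    _ = ((∑ i, ∑ j, v i * (Qd i i * v j)) + (∑ i, ∑ j, v i * (Qd j j * v j)))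
          - (∑ i, ∑ j, v i * (Qd i j * v j)) - (∑ i, ∑ j, v i * (Qd j i * v j)) := by
          simp [Finset.sum_sub_distrib, Finset.sum_add_distrib]
    _ = -2 * S := by rw [hA1, hA2, hA3, hA4]; ring
  -- bilinear expansions
  set A := p ⬝ᵥ Ω *ᵥ p with hA_def
  set B := p ⬝ᵥ Ω *ᵥ q with hB_def
  set C := q ⬝ᵥ Ω *ᵥ p with hC_def
  set D := q ⬝ᵥ Ω *ᵥ q with hD_def
  have hvv : v ⬝ᵥ Ω *ᵥ v = A - B - C + D := by
    rw [hv_def, hA_def, hB_def, hC_def, hD_def]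
    simp [sub_dotProduct, Matrix.mulVec_sub, dotProduct_sub]
    ring
  have hm : (θ • p + (1 - θ) • q) ⬝ᵥ Ω *ᵥ (θ • p + (1 - θ) • q)
      = θ * θ * A + θ * (1 - θ) * B + (1 - θ) * θ * C + (1 - θ) * (1 - θ) * D := by
    rw [hA_def, hB_def, hC_def, hD_def]
    simp [add_dotProduct, smul_dotProduct, Matrix.mulVec_add,
      Matrix.mulVec_smul, dotProduct_add, dotProduct_smul, smul_eq_mul]
    ring
  rw [hm]
  nlinarith [mul_pos (mul_pos hθ0 (sub_pos.mpr hθ1)) hS, hvv, hvΩv]
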